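/- Let k be a real number with k ≥ 5/2, let f be a positive integer, and let χ : ℕ → ℝ be any function with χ(1) = 1 and |χ(g)| ≤ 1 for all g. Then Σ_{g ∣ f} μ(g)·χ(g)·g^{1/2−k}·σ_{2−2k}(f/g) ≥ 1 − (ζ(2) − 1)·ζ(3), and moreover 1 − (ζ(2) − 1)·ζ(3) ≥ 1/5. Here μ is the Möbius function, the sum runs over the positive divisors g of f, ζ(2) = π²/6 and ζ(3) = Σ_{n ≥ 1} 1/n³. -/

import Mathlib

open Real
open scoped BigOperators

/-- The Riemann zeta value `ζ(3) = Σ_{n ≥ 1} 1/n³`. -/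
noncomputable def zetaThree : ℝ := ∑' n : ℕ, 1 / ((n : ℝ) + 1) ^ 3

private lemma summable3 : Summable (fun n : ℕ => 1 / ((n : ℝ) + 1) ^ 3) := by
  have h := (Real.summable_one_div_nat_pow (p := 3)).mpr (by norm_num)
  have := (summable_nat_add_iff 1).mpr h
  simpa [Nat.cast_add] using this

private lemma sum_le_tsum_shift {F : ℕ → ℝ} (k : ℕ) (hF : ∀ n, 0 ≤ F n)
    (hs : Summable fun n => F (n + k)) (s : Finset ℕ) (h : ∀ d ∈ s, k ≤ d) :
    ∑ d ∈ s, F d ≤ ∑' n, F (n + k) := by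
  have himg : ∑ j ∈ s.image (· - k), F (j + k) = ∑ d ∈ s, F d := by
    rw [Finset.sum_image]
    · exact Finset.sum_congr rfl fun d hd => by rw [Nat.sub_add_cancel (h d hd)]
    · intro x hx y hy hxy
      have := h x hx; have := h y hy; simp only at hxy; omega
  rw [← himg]
  exact Summable.sum_le_tsum _ (fun i _ => hF _) hs

private lemma zetaThree_nonneg : 0 ≤ zetaThree :=
  tsum_nonneg fun n => by positivity

private lemma zetaThree_le : zetaThree ≤ 29 / 24 := by
  have hsplit := Summable.sum_add_tsum_nat_add (f := fun n : ℕ => 1 / ((n : ℝ) + 1) ^ 3) 2 summable3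
  have htail : (∑' n : ℕ, 1 / (((n + 2 : ℕ) : ℝ) + 1) ^ 3) ≤ 1 / 12 := by
    apply Real.tsum_le_of_sum_range_le (fun n => by positivity)
    intro n
    have key : ∀ i : ℕ, (1 : ℝ) / (((i + 2 : ℕ) : ℝ) + 1) ^ 3 ≤
        (fun j : ℕ => 1 / (2 * ((j : ℝ) + 2) * ((j : ℝ) + 3))) i
          - (fun j : ℕ => 1 / (2 * ((j : ℝ) + 2) * ((j : ℝ) + 3))) (i + 1) := by
      intro i
      have hi : (0:ℝ) ≤ (i:ℝ) := Nat.cast_nonneg i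
      push_cast
      rw [div_sub_div _ _ (by positivity) (by positivity),
        div_le_div_iff₀ (by positivity) (by positivity)]
      ring_nf
      nlinarith [sq_nonneg ((i:ℝ)), pow_nonneg hi 3, pow_nonneg hi 4]
    calc ∑ i ∈ Finset.range n, 1 / (((i + 2 : ℕ) : ℝ) + 1) ^ 3
        ≤ ∑ i ∈ Finset.range n, ((fun j : ℕ => 1 / (2 * ((j : ℝ) + 2) * ((j : ℝ) + 3))) i
            - (fun j : ℕ => 1 / (2 * ((j : ℝ) + 2) * ((j : ℝ) + 3))) (i + 1)) :=
          Finset.sum_le_sum fun i _ => key i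
      _ = (fun j : ℕ => 1 / (2 * ((j : ℝ) + 2) * ((j : ℝ) + 3))) 0
            - (fun j : ℕ => 1 / (2 * ((j : ℝ) + 2) * ((j : ℝ) + 3))) n :=
          Finset.sum_range_sub' _ n
      _ ≤ 1 / 12 := by
          norm_num
          positivity
  have : zetaThree = (∑ i ∈ Finset.range 2, 1 / ((i : ℝ) + 1) ^ 3)
      + ∑' n : ℕ, 1 / (((n + 2 : ℕ) : ℝ) + 1) ^ 3 := by
    rw [zetaThree, ← hsplit]
  rw [this]
  norm_num [Finset.sum_range_succ] at htail ⊢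
  linarith

private lemma hasSum_tail2 : HasSum (fun n : ℕ => 1 / (((n + 2 : ℕ) : ℝ)) ^ 2) (π ^ 2 / 6 - 1) := by
  have h := (hasSum_nat_add_iff' (f := fun n : ℕ => 1 / (n : ℝ) ^ 2) 2).mpr hasSum_zeta_two
  simpa [Finset.sum_range_succ] using h

theorem twisted_divisor_sum_lower_bound
    (k : ℝ) (hk : 5 / 2 ≤ k) (f : ℕ) (hf : 0 < f)
    (χ : ℕ → ℝ) (hχ1 : χ 1 = 1) (hχ : ∀ g, |χ g| ≤ 1) :
    1 - (π ^ 2 / 6 - 1) * zetaThree ≤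
      ∑ g ∈ f.divisors, (ArithmeticFunction.moebius g : ℝ) * χ g * (g : ℝ) ^ (1 / 2 - k)
        * ∑ d ∈ (f / g).divisors, (d : ℝ) ^ (2 - 2 * k) ∧
    (1 : ℝ) / 5 ≤ 1 - (π ^ 2 / 6 - 1) * zetaThree := by
  constructor
  · -- main inequality
    have h1mem : (1 : ℕ) ∈ f.divisors := Nat.one_mem_divisors.mpr hf.ne'
    rw [← Finset.add_sum_erase _ _ h1mem]
    simp only [Nat.cast_one, ArithmeticFunction.moebius_apply_one, Int.cast_one, hχ1,
      one_mul, Real.one_rpow, Nat.div_one, mul_one]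
    -- the g = 1 term is at least 1
    have hone : (1 : ℝ) ≤ ∑ d ∈ f.divisors, (d : ℝ) ^ (2 - 2 * k) := by
      have := Finset.single_le_sum (f := fun d : ℕ => (d : ℝ) ^ (2 - 2 * k))
        (fun d _ => Real.rpow_nonneg (Nat.cast_nonneg d) _) h1mem
      simpa using this
    -- bound on σ-sums
    have hσle : ∀ m : ℕ, ∑ d ∈ m.divisors, (d : ℝ) ^ (2 - 2 * k) ≤ zetaThree := by
      intro m
      have step1 : ∑ d ∈ m.divisors, (d : ℝ) ^ (2 - 2 * k)
          ≤ ∑ d ∈ m.divisors, 1 / (d : ℝ) ^ 3 := by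
        apply Finset.sum_le_sum
        intro d hd
        have hd1 : 1 ≤ d := Nat.pos_of_mem_divisors hd
        have hd1R : (1 : ℝ) ≤ (d : ℝ) := by exact_mod_cast hd1
        have hle := Real.rpow_le_rpow_of_exponent_le hd1R
          (show (2 - 2 * k : ℝ) ≤ -((3 : ℕ) : ℝ) by push_cast; linarith)
        rwa [Real.rpow_neg (by positivity), Real.rpow_natCast, ← one_div] at hle
      have step2 : ∑ d ∈ m.divisors, 1 / (d : ℝ) ^ 3 ≤ zetaThree := by
        have hz : zetaThree = ∑' n : ℕ, (fun d : ℕ => 1 / (d : ℝ) ^ 3) (n + 1) := by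
          rw [zetaThree]
          congr 1
          funext n
          push_cast
          ring_nf
        rw [hz]
        apply sum_le_tsum_shift 1 (fun n => by positivity)
        · convert summable3 using 1
          funext n; push_cast; ring_nf
        · exact fun d hd => Nat.pos_of_mem_divisors hd
      linarith
    -- bound on each term with g ≥ 2
    have hE : ∀ g ∈ f.divisors.erase 1,
        -(1 / (g : ℝ) ^ 2 * zetaThree) ≤ (ArithmeticFunction.moebius g : ℝ) * χ g
          * (g : ℝ) ^ (1 / 2 - k) * ∑ d ∈ (f / g).divisors, (d : ℝ) ^ (2 - 2 * k) := by
      intro g hg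
      have hg1 : g ≠ 1 := Finset.ne_of_mem_erase hg
      have hgmem : g ∈ f.divisors := Finset.mem_of_mem_erase hg
      have hgpos : 0 < g := Nat.pos_of_mem_divisors hgmem
      have hg2 : 2 ≤ g := by omega
      have hg1R : (1 : ℝ) ≤ (g : ℝ) := by exact_mod_cast hgpos
      have hrp : (g : ℝ) ^ ((1 : ℝ) / 2 - k) ≤ 1 / (g : ℝ) ^ 2 := by
        have hle := Real.rpow_le_rpow_of_exponent_le hg1R
          (show (1 / 2 - k : ℝ) ≤ -((2 : ℕ) : ℝ) by push_cast; linarith)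
        rwa [Real.rpow_neg (by positivity), Real.rpow_natCast, ← one_div] at hle
      have hσn : (0 : ℝ) ≤ ∑ d ∈ (f / g).divisors, (d : ℝ) ^ (2 - 2 * k) :=
        Finset.sum_nonneg fun d _ => Real.rpow_nonneg (Nat.cast_nonneg d) _
      have hμχ : -1 ≤ (ArithmeticFunction.moebius g : ℝ) * χ g := by
        have h1 : |(ArithmeticFunction.moebius g : ℝ)| ≤ 1 := by
          rw [← Int.cast_abs]
          exact_mod_cast ArithmeticFunction.abs_moebius_le_one (n := g)
        have habs : |(ArithmeticFunction.moebius g : ℝ) * χ g| ≤ 1 := by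
          rw [abs_mul]; exact mul_le_one₀ h1 (abs_nonneg _) (hχ g)
        linarith [neg_abs_le ((ArithmeticFunction.moebius g : ℝ) * χ g)]
      have hXn : (0 : ℝ) ≤ (g : ℝ) ^ ((1 : ℝ) / 2 - k)
          * ∑ d ∈ (f / g).divisors, (d : ℝ) ^ (2 - 2 * k) :=
        mul_nonneg (Real.rpow_nonneg (Nat.cast_nonneg g) _) hσn
      have hXle : (g : ℝ) ^ ((1 : ℝ) / 2 - k)
          * ∑ d ∈ (f / g).divisors, (d : ℝ) ^ (2 - 2 * k) ≤ 1 / (g : ℝ) ^ 2 * zetaThree :=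
        mul_le_mul hrp (hσle _) hσn (by positivity)
      calc -(1 / (g : ℝ) ^ 2 * zetaThree)
          ≤ -((g : ℝ) ^ ((1 : ℝ) / 2 - k)
            * ∑ d ∈ (f / g).divisors, (d : ℝ) ^ (2 - 2 * k)) := neg_le_neg hXle
        _ = (-1) * ((g : ℝ) ^ ((1 : ℝ) / 2 - k)
            * ∑ d ∈ (f / g).divisors, (d : ℝ) ^ (2 - 2 * k)) := by ring
        _ ≤ ((ArithmeticFunction.moebius g : ℝ) * χ g) * ((g : ℝ) ^ ((1 : ℝ) / 2 - k)
            * ∑ d ∈ (f / g).divisors, (d : ℝ) ^ (2 - 2 * k)) :=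
            mul_le_mul_of_nonneg_right hμχ hXn
        _ = (ArithmeticFunction.moebius g : ℝ) * χ g * (g : ℝ) ^ ((1 : ℝ) / 2 - k)
            * ∑ d ∈ (f / g).divisors, (d : ℝ) ^ (2 - 2 * k) := by ring
    -- sum over the erased set
    have hsum2 : ∑ g ∈ f.divisors.erase 1, 1 / (g : ℝ) ^ 2 ≤ π ^ 2 / 6 - 1 := by
      have := sum_le_tsum_shift (F := fun g : ℕ => 1 / (g : ℝ) ^ 2) 2
        (fun n => by positivity) hasSum_tail2.summable (f.divisors.erase 1)
        (fun d hd => by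
          have := Nat.pos_of_mem_divisors (Finset.mem_of_mem_erase hd)
          have := Finset.ne_of_mem_erase hd
          omega)
      rw [hasSum_tail2.tsum_eq] at this
      exact this
    have hrest : -((π ^ 2 / 6 - 1) * zetaThree)
        ≤ ∑ g ∈ f.divisors.erase 1, (ArithmeticFunction.moebius g : ℝ) * χ g
          * (g : ℝ) ^ ((1 : ℝ) / 2 - k) * ∑ d ∈ (f / g).divisors, (d : ℝ) ^ (2 - 2 * k) := by
      calc -((π ^ 2 / 6 - 1) * zetaThree)
          ≤ -((∑ g ∈ f.divisors.erase 1, 1 / (g : ℝ) ^ 2) * zetaThree) := by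
            have := mul_le_mul_of_nonneg_right hsum2 zetaThree_nonneg
            linarith
        _ = ∑ g ∈ f.divisors.erase 1, -(1 / (g : ℝ) ^ 2 * zetaThree) := by
            rw [Finset.sum_mul, ← Finset.sum_neg_distrib]
        _ ≤ _ := Finset.sum_le_sum hE
    linarith
  · -- numeric bound
    have h1 : π ^ 2 ≤ 9.9225 := by nlinarith [Real.pi_lt_d2, Real.pi_gt_three]
    have h2 : (π ^ 2 / 6 - 1) * zetaThree ≤ (9.9225 / 6 - 1) * (29 / 24) :=
      mul_le_mul (by linarith) zetaThree_le zetaThree_nonneg (by norm_num)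
    rw [show (9.9225 / 6 - 1 : ℝ) * (29 / 24) = 0.65375 * (29 / 24) by norm_num] at h2
    nlinarith [h2]
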